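/- In the lower-bound instance with n agents and 2n−1 items (where each agent values each of items 1,…,n−1 at 1, item 2n−i at 1−ε, and all other items at ε/(2n), with 0 < ε < 1), any EFX allocation Y of any subset S of the items gives every agent value at most 1, hence NW(Y) ≤ 1. -/

import Mathlib

/-- If a bundle contains no "big" item (value `1`), the agent's value for it is
at most `1 - ε/(2n)`. -/
lemma aux_small_bundle (n : ℕ) (hn : 1 ≤ n)
    (ε : ℝ) (hε0 : 0 < ε) (hε1 : ε < 1)
    (v : Fin n → Fin (2 * n - 1) → ℝ)
    (hv : ∀ i g, v i g =
      if (g : ℕ) < n - 1 then 1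
      else if (g : ℕ) = 2 * n - 2 - (i : ℕ) then 1 - ε
      else ε / (2 * n))
    (j : Fin n) (T : Finset (Fin (2 * n - 1)))
    (hno : ∀ g ∈ T, ¬ ((g : ℕ) < n - 1)) :
    ∑ x ∈ T, v j x ≤ 1 - ε / (2 * n) := by
  have hjlt := j.isLt
  have h2n : (0:ℝ) < 2 * n := by
    have : (1:ℝ) ≤ n := by exact_mod_cast hn
    linarith
  set s : Fin (2 * n - 1) := ⟨2 * n - 2 - (j : ℕ), by omega⟩ with hs
  have hval : ∀ x ∈ T, v j x
      = ε / (2 * n) + (if x = s then (1 - ε - ε / (2 * n)) else 0) := by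
    intro x hx
    rw [hv, if_neg (hno x hx)]
    by_cases hxs : x = s
    · subst hxs
      rw [if_pos rfl, if_pos rfl]
      ring
    · rw [if_neg, if_neg hxs]
      · ring
      · intro hcontra
        exact hxs (Fin.ext hcontra)
  rw [Finset.sum_congr rfl hval, Finset.sum_add_distrib, Finset.sum_const,
    Finset.sum_ite_eq' T s]
  have hcardN : T.card ≤ 2 * n - 1 := by simpa using Finset.card_le_univ T
  have hcard : ((T.card : ℝ)) ≤ 2 * (n:ℝ) - 1 := by
    have h1 : ((T.card : ℝ)) ≤ ((2 * n - 1 : ℕ) : ℝ) := Nat.cast_le.2 hcardN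
    have h2 : ((2 * n - 1 : ℕ) : ℝ) = 2 * (n:ℝ) - 1 := by
      have h3 : (1:ℕ) ≤ 2 * n := by omega
      push_cast [h3]
      ring
    linarith [h1, h2.le, h2.ge]
  rw [nsmul_eq_mul]
  have hmul : ((T.card : ℝ)) * (ε / (2 * n)) ≤ (2 * (n:ℝ) - 1) * (ε / (2 * n)) := by
    apply mul_le_mul_of_nonneg_right hcard
    positivity
  have hcancel : (2 * (n:ℝ)) * (ε / (2 * n)) = ε := by
    field_simp
  have hpos : (0:ℝ) < ε / (2 * n) := by positivity
  by_cases hsT : s ∈ T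
  · rw [if_pos hsT]
    nlinarith [hmul, hcancel, hpos]
  · rw [if_neg hsT]
    nlinarith [hmul, hcancel, hpos]

/-- In the lower-bound instance with `n` agents and `2n−1` items (agent `i` values
items `1,…,n−1` at `1`, item `2n−i` at `1−ε`, all other items at `ε/(2n)`), any EFX
allocation `Y` of any subset `S` gives every agent value at most `1`, hence
`NW(Y) ≤ 1`. (Agents and items are 0-indexed here: agent `i` stands for agent
`i+1`, item `g` for item `g+1`.) -/
theorem lower_bound_instance_efx_value_le_one (n : ℕ) (hn : 1 ≤ n)
    (ε : ℝ) (hε0 : 0 < ε) (hε1 : ε < 1)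
    (v : Fin n → Fin (2 * n - 1) → ℝ)
    (hv : ∀ i g, v i g =
      if (g : ℕ) < n - 1 then 1
      else if (g : ℕ) = 2 * n - 2 - (i : ℕ) then 1 - ε
      else ε / (2 * n))
    (S : Finset (Fin (2 * n - 1))) (Y : Fin n → Finset (Fin (2 * n - 1)))
    (hYS : ∀ i, Y i ⊆ S)
    (hpart : ∀ g ∈ S, ∃! i, g ∈ Y i)
    (hEFX : ∀ i j : Fin n, ∀ g ∈ Y j,
      ∑ x ∈ Y i, v i x ≥ ∑ x ∈ Y j \ {g}, v i x) :
    (∀ i, ∑ x ∈ Y i, v i x ≤ 1) ∧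
      (∏ i, ∑ x ∈ Y i, v i x) ^ (1 / (n : ℝ)) ≤ 1 := by
  have h2n : (0:ℝ) < 2 * n := by
    have : (1:ℝ) ≤ n := by exact_mod_cast hn
    linarith
  have hpos : (0:ℝ) < ε / (2 * n) := by positivity
  -- all values are nonnegative
  have hvnn : ∀ i g, 0 ≤ v i g := by
    intro i g
    rw [hv]
    split_ifs <;> linarith
  -- some agent receives no big item
  obtain ⟨j, hj⟩ : ∃ j : Fin n, ∀ g ∈ Y j, ¬ ((g : ℕ) < n - 1) := by
    by_contra h
    push_neg at h
    choose f hf1 hf2 using h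
    have hinj : Function.Injective f := by
      intro a b hab
      obtain ⟨i, _, hu⟩ := hpart (f a) (hYS a (hf1 a))
      have ha : a = i := hu a (hf1 a)
      have hb : b = i := hu b (hab ▸ hf1 b)
      rw [ha, hb]
    have hinj' : Function.Injective (fun a : Fin n => (⟨(f a : ℕ), hf2 a⟩ : Fin (n - 1))) := by
      intro a b hab
      apply hinj
      simp only [Fin.mk.injEq] at hab
      exact Fin.ext hab
    have := Fintype.card_le_of_injective _ hinj'
    simp only [Fintype.card_fin] at this
    omega
  -- agent j's value is strictly below 1
  have hjsmall : ∑ x ∈ Y j, v j x ≤ 1 - ε / (2 * n) :=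
    aux_small_bundle n hn ε hε0 hε1 v hv j (Y j) hj
  -- every agent's value is at most 1
  have h1 : ∀ i, ∑ x ∈ Y i, v i x ≤ 1 := by
    intro i
    by_cases hbig : ∃ g ∈ Y i, (g : ℕ) < n - 1
    · obtain ⟨g, hg, hgbig⟩ := hbig
      -- Y i = {g}
      have hsingle : Y i = {g} := by
        rw [Finset.eq_singleton_iff_unique_mem]
        refine ⟨hg, ?_⟩
        intro g' hg'
        by_contra hne
        have hEFXji := hEFX j i g' hg'
        have hgmem : g ∈ Y i \ {g'} := by
          simp [Finset.mem_sdiff, hg, Ne.symm hne]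
        have hge : v j g ≤ ∑ x ∈ Y i \ {g'}, v j x :=
          Finset.single_le_sum (fun x _ => hvnn j x) hgmem
        have hvjg : v j g = 1 := by rw [hv, if_pos hgbig]
        linarith [hEFXji, hge, hjsmall, hpos, hvjg.ge, hvjg.le]
      rw [hsingle, Finset.sum_singleton, hv, if_pos hgbig]
    · push_neg at hbig
      have := aux_small_bundle n hn ε hε0 hε1 v hv i (Y i) (fun g hg => by
        have := hbig g hg; omega)
      linarith
  refine ⟨h1, ?_⟩
  have hsumnn : ∀ i : Fin n, 0 ≤ ∑ x ∈ Y i, v i x := fun i =>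
    Finset.sum_nonneg fun x _ => hvnn i x
  have hprod0 : 0 ≤ ∏ i, ∑ x ∈ Y i, v i x :=
    Finset.prod_nonneg fun i _ => hsumnn i
  have hprod1 : (∏ i, ∑ x ∈ Y i, v i x) ≤ 1 :=
    Finset.prod_le_one (fun i _ => hsumnn i) (fun i _ => h1 i)
  exact Real.rpow_le_one hprod0 hprod1 (by positivity)
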